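/- Let Ω be a locally compact, non-compact Hausdorff space, α an aperiodic homeomorphism of Ω, and w a continuous positive function on Ω such that w and w⁻¹ = 1/w are bounded, so that T̃_{α,w}(f) = w·(f∘α) is an invertible bounded linear operator on C₀(Ω). Then the following are equivalent: (1) T̃_{α,w} is topologically semi-transitive on C₀(Ω); (2) for every compact subset K of Ω there exists a strictly increasing sequence (n_k) of natural numbers such that lim_{k→∞} [ ( sup_{t∈K} ∏_{j=0}^{n_k−1} w(α^{j−n_k}(t)) ) · ( sup_{t∈K} ∏_{j=0}^{n_k−1} (w(α^j(t)))⁻¹ ) ] = 0. -/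

import Mathlib

open scoped ZeroAtInfty
open Filter Finset

/-- A bounded linear operator `T` on a complex normed space is *topologically
semi-transitive* if for every pair of nonempty open subsets `O₁, O₂` there exist
`n ∈ ℕ` and `λ ∈ ℂ \ {0}` such that `λ • T^n(O₁) ∩ O₂ ≠ ∅`. -/
def IsSemiTransitive {E : Type*} [NormedAddCommGroup E] [NormedSpace ℂ E]
    (T : E →L[ℂ] E) : Prop :=
  ∀ O₁ O₂ : Set E, IsOpen O₁ → IsOpen O₂ → O₁.Nonempty → O₂.Nonempty →
    ∃ (n : ℕ) (lam : ℂ), 1 ≤ n ∧ lam ≠ 0 ∧ ∃ f ∈ O₁, lam • (T ^ n) f ∈ O₂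

private lemma symm_iter {Ω : Type*} [TopologicalSpace Ω] (α : Ω ≃ₜ Ω) (m n : ℕ) (h : m ≤ n)
    (t : Ω) : (⇑α.symm)^[m] ((⇑α)^[n] t) = (⇑α)^[n-m] t := by
  conv_lhs => rw [show n = m + (n-m) by omega, Function.iterate_add_apply]
  exact (Function.LeftInverse.iterate α.symm_apply_apply m) _

private lemma iter_symm {Ω : Type*} [TopologicalSpace Ω] (α : Ω ≃ₜ Ω) (n : ℕ) (t : Ω) :
    (⇑α)^[n] ((⇑α.symm)^[n] t) = t :=
  (Function.LeftInverse.iterate α.apply_symm_apply n) t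

private lemma prodA {Ω : Type*} [TopologicalSpace Ω] (α : Ω ≃ₜ Ω) (w : Ω → ℝ) (n : ℕ) (t : Ω) :
    ∏ j ∈ range n, w ((⇑α.symm)^[n-j] ((⇑α)^[n] t)) = ∏ j ∈ range n, w ((⇑α)^[j] t) := by
  refine Finset.prod_congr rfl fun j hj => ?_
  rw [mem_range] at hj
  rw [symm_iter α (n-j) n (by omega) t, show n - (n-j) = j by omega]

private lemma C0_norm_apply_le {Ω : Type*} [TopologicalSpace Ω] (f : C₀(Ω, ℂ)) (t : Ω) :
    ‖f t‖ ≤ ‖f‖ := by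
  rw [← ZeroAtInftyContinuousMap.norm_toBCF_eq_norm]
  exact f.toBCF.norm_coe_le_norm t

private lemma C0_norm_le {Ω : Type*} [TopologicalSpace Ω] {f : C₀(Ω, ℂ)} {M : ℝ} (h0 : 0 ≤ M)
    (h : ∀ t, ‖f t‖ ≤ M) : ‖f‖ ≤ M := by
  rw [← ZeroAtInftyContinuousMap.norm_toBCF_eq_norm]
  exact (BoundedContinuousFunction.norm_le h0).2 h

private lemma Tpow {Ω : Type*} [TopologicalSpace Ω] (α : Ω ≃ₜ Ω) (w : Ω → ℝ)
    (T : C₀(Ω, ℂ) →L[ℂ] C₀(Ω, ℂ))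
    (hT : ∀ (f : C₀(Ω, ℂ)) (t : Ω), T f t = (w t : ℂ) * f (α t)) :
    ∀ (n : ℕ) (f : C₀(Ω, ℂ)) (t : Ω),
      (T ^ n) f t = ((∏ j ∈ range n, w ((⇑α)^[j] t) : ℝ) : ℂ) * f ((⇑α)^[n] t) := by
  intro n
  induction n with
  | zero => intro f t; simp
  | succ n ih =>
    intro f t
    rw [pow_succ, ContinuousLinearMap.mul_apply, ih (T f) t, hT f ((⇑α)^[n] t)]
    rw [Finset.prod_range_succ, Function.iterate_succ_apply' (⇑α) n t]
    push_cast
    ring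

private lemma TSpow {Ω : Type*} [TopologicalSpace Ω]
    (T S : C₀(Ω, ℂ) →L[ℂ] C₀(Ω, ℂ)) (hTS : ∀ f, T (S f) = f) :
    ∀ (n : ℕ) (g : C₀(Ω, ℂ)), (T ^ n) ((S ^ n) g) = g := by
  intro n
  induction n with
  | zero => intro g; simp
  | succ n ih =>
    intro g
    rw [pow_succ T, pow_succ' S, ContinuousLinearMap.mul_apply, ContinuousLinearMap.mul_apply,
      hTS, ih]

private noncomputable def toC0 {Ω : Type*} [TopologicalSpace Ω] (φ : C(Ω, ℝ))
    (hφ : HasCompactSupport ⇑φ) : C₀(Ω, ℂ) :=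
  ⟨⟨fun t => (φ t : ℂ), Complex.continuous_ofReal.comp φ.continuous⟩,
    HasCompactSupport.is_zero_at_infty (hφ.comp_left (g := Complex.ofReal) Complex.ofReal_zero)⟩

@[simp] private lemma toC0_apply {Ω : Type*} [TopologicalSpace Ω] (φ : C(Ω, ℝ))
    (hφ : HasCompactSupport ⇑φ) (t : Ω) : toC0 φ hφ t = (φ t : ℂ) := rfl

private noncomputable def toC0s {Ω : Type*} [TopologicalSpace Ω] [T2Space Ω] (α : Ω ≃ₜ Ω)
    (N : ℕ) (φ : C(Ω, ℝ)) (hφ : HasCompactSupport ⇑φ) : C₀(Ω, ℂ) :=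
  ⟨⟨fun s => (φ ((⇑α.symm)^[N] s) : ℂ),
      Complex.continuous_ofReal.comp (φ.continuous.comp (α.symm.continuous.iterate N))⟩,
    HasCompactSupport.is_zero_at_infty <| HasCompactSupport.intro
      (IsCompact.image hφ (α.continuous.iterate N))
      (by
        intro x hx
        have : (⇑α.symm)^[N] x ∉ tsupport ⇑φ := by
          intro hy
          exact hx ⟨_, hy, Function.LeftInverse.iterate α.apply_symm_apply N x⟩
        simp [image_eq_zero_of_notMem_tsupport this])⟩

@[simp] private lemma toC0s_apply {Ω : Type*} [TopologicalSpace Ω] [T2Space Ω] (α : Ω ≃ₜ Ω)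
    (N : ℕ) (φ : C(Ω, ℝ)) (hφ : HasCompactSupport ⇑φ) (s : Ω) :
    toC0s α N φ hφ s = (φ ((⇑α.symm)^[N] s) : ℂ) := rfl


private lemma seq_build {P : ℕ → ℝ}
    (hP : ∀ (p : ℕ) (k : ℕ), ∃ n', p < n' ∧ P n' < 1/((k:ℝ)+1)) :
    ∃ seq : ℕ → ℕ, StrictMono seq ∧ (∀ k, 1 ≤ seq k) ∧ ∀ k, P (seq k) < 1/((k:ℝ)+1) := by
  choose g hg1 hg2 using hP
  set s : ℕ → ℕ := fun k => Nat.rec (g 0 0) (fun k ih => g ih (k+1)) k with hs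
  have hs0 : s 0 = g 0 0 := rfl
  have hsS : ∀ k, s (k+1) = g (s k) (k+1) := fun k => rfl
  have hlt : ∀ k, s k < s (k+1) := by
    intro k
    rw [hsS k]
    exact hg1 (s k) (k+1)
  refine ⟨s, strictMono_nat_of_lt_succ hlt, ?_, ?_⟩
  · intro k
    induction k with
    | zero =>
      rw [hs0]
      have := hg1 0 0
      omega
    | succ k ih =>
      have := hlt k
      omega
  · intro k
    cases k with
    | zero =>
      rw [hs0]
      exact hg2 0 0
    | succ k =>
      rw [hsS k]
      exact hg2 _ (k+1)

set_option maxHeartbeats 1000000 in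
private lemma forward_claim
    {Ω : Type*} [TopologicalSpace Ω] [LocallyCompactSpace Ω] [T2Space Ω]
    (α : Ω ≃ₜ Ω)
    (haper : ∀ K : Set Ω, IsCompact K →
      ∃ N : ℕ, 0 < N ∧ ∀ n ≥ N, ((⇑α)^[n] '' K) ∩ K = ∅)
    (w : Ω → ℝ) (hw_pos : ∀ t, 0 < w t)
    (hw_bdd : ∃ C, ∀ t, w t ≤ C) (hw_inv_bdd : ∃ C, ∀ t, (w t)⁻¹ ≤ C)
    (T : C₀(Ω, ℂ) →L[ℂ] C₀(Ω, ℂ))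
    (hT : ∀ (f : C₀(Ω, ℂ)) (t : Ω), T f t = (w t : ℂ) * f (α t))
    (hst : IsSemiTransitive T)
    (K : Set Ω) (hK : IsCompact K) (m : ℕ) (δ : ℝ) (hδ : 0 < δ) :
    ∃ n : ℕ, m < n ∧
      sSup ((fun t => ∏ j ∈ range n, w ((⇑α.symm)^[n - j] t)) '' K) *
      sSup ((fun t => ∏ j ∈ range n, (w ((⇑α)^[j] t))⁻¹) '' K) < δ := by
  rcases K.eq_empty_or_nonempty with hKe | ⟨t₀, ht₀⟩
  · exact ⟨m + 1, by omega, by simpa [hKe, Real.sSup_empty] using hδ⟩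
  -- constants
  obtain ⟨C, hC1, hCw⟩ : ∃ C : ℝ, 1 ≤ C ∧ ∀ t, w t ≤ C := by
    obtain ⟨C₁, hC₁⟩ := hw_bdd
    exact ⟨max C₁ 1, le_max_right _ _, fun t => (hC₁ t).trans (le_max_left _ _)⟩
  obtain ⟨C', hC'1, hwlow⟩ : ∃ C' : ℝ, 1 ≤ C' ∧ ∀ t, C'⁻¹ ≤ w t := by
    obtain ⟨C₂, hC₂⟩ := hw_inv_bdd
    refine ⟨max C₂ 1, le_max_right _ _, fun t => ?_⟩
    have h1 : (0:ℝ) < (w t)⁻¹ := inv_pos.mpr (hw_pos t)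
    have h2 : (w t)⁻¹ ≤ max C₂ 1 := (hC₂ t).trans (le_max_left _ _)
    have := inv_anti₀ h1 h2
    rwa [inv_inv] at this
  have hC'pos : (0:ℝ) < C' := by linarith
  obtain ⟨D, hDeq⟩ : ∃ D : ℝ, D = C * C' := ⟨_, rfl⟩
  have hD1 : (1:ℝ) ≤ D := by rw [hDeq]; nlinarith
  have hDpos : (0:ℝ) < D := by linarith
  -- bump function
  obtain ⟨φ, hφ1, -, hφc, hφ01⟩ :=
    exists_continuous_one_zero_of_isCompact hK isClosed_empty (Set.disjoint_empty _)
  have hKL : K ⊆ tsupport ⇑φ := by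
    intro t ht
    apply subset_tsupport
    have : φ t = 1 := hφ1 ht
    simp [Function.mem_support, this]
  have hφ0 : ∀ x, x ∉ tsupport ⇑φ → φ x = 0 := fun x hx => image_eq_zero_of_notMem_tsupport hx
  obtain ⟨N, hNpos, hNdis⟩ := haper (tsupport ⇑φ) hφc
  have notinF : ∀ n' ≥ N, ∀ x ∈ tsupport ⇑φ, (⇑α)^[n'] x ∉ tsupport ⇑φ := by
    intro n' hn' x hx hmem
    have : (⇑α)^[n'] x ∈ ((⇑α)^[n'] '' tsupport ⇑φ) ∩ tsupport ⇑φ :=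
      ⟨Set.mem_image_of_mem _ hx, hmem⟩
    rw [hNdis n' hn'] at this
    exact this
  have notinB : ∀ n' ≥ N, ∀ x ∈ tsupport ⇑φ, (⇑α.symm)^[n'] x ∉ tsupport ⇑φ := by
    intro n' hn' x hx hmem
    exact notinF n' hn' _ hmem (by rw [iter_symm α n' x]; exact hx)
  -- epsilon
  obtain ⟨M, hMm, hMN⟩ : ∃ M : ℕ, m ≤ M ∧ N ≤ M := ⟨max m N, le_max_left _ _, le_max_right _ _⟩
  obtain ⟨ε, hεpos, hεhalf, hεsqrt, hεM⟩ :
      ∃ ε : ℝ, 0 < ε ∧ ε ≤ 1/2 ∧ ε ≤ Real.sqrt δ / 3 ∧ ε * (12 * D^(M+1)) ≤ 1 := by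
    refine ⟨min (1/2) (min (Real.sqrt δ / 3) ((12 * D^(M+1))⁻¹)), ?_, min_le_left _ _,
      le_trans (min_le_right _ _) (min_le_left _ _), ?_⟩
    · apply lt_min (by norm_num)
      apply lt_min
      · have := Real.sqrt_pos.mpr hδ; linarith
      · have : (0:ℝ) < 12 * D^(M+1) := by positivity
        exact inv_pos.mpr this
    · have h1 : min (1/2) (min (Real.sqrt δ / 3) ((12 * D^(M+1))⁻¹)) ≤ (12 * D^(M+1))⁻¹ :=
        le_trans (min_le_right _ _) (min_le_right _ _)
      have h2 : (0:ℝ) < 12 * D^(M+1) := by positivity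
      calc min (1/2) (min (Real.sqrt δ / 3) ((12 * D^(M+1))⁻¹)) * (12 * D^(M+1))
          ≤ (12 * D^(M+1))⁻¹ * (12 * D^(M+1)) := mul_le_mul_of_nonneg_right h1 (le_of_lt h2)
        _ = 1 := inv_mul_cancel₀ (ne_of_gt h2)
  have h1ε : (0:ℝ) < 1 - ε := by linarith
  -- the two C₀ functions
  set φC : C₀(Ω, ℂ) := toC0 φ hφc with hφCdef
  set ψC : C₀(Ω, ℂ) := toC0s α N φ hφc with hψCdef
  have hφCz : ∀ x, x ∉ tsupport ⇑φ → φC x = 0 := by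
    intro x hx; simp [hφCdef, hφ0 x hx]
  have hψCz : ∀ x, (⇑α.symm)^[N] x ∉ tsupport ⇑φ → ψC x = 0 := by
    intro x hx; simp [hψCdef, hφ0 _ hx]
  have hsum1 : ∀ x, ‖φC x + ψC x‖ ≤ 1 := by
    intro x
    by_cases hx : x ∈ tsupport ⇑φ
    · rw [hψCz x (notinB N le_rfl x hx), add_zero]
      simp only [hφCdef, toC0_apply, Complex.norm_real, Real.norm_eq_abs]
      rw [abs_of_nonneg (hφ01 x).1]; exact (hφ01 x).2
    · rw [hφCz x hx, zero_add]
      simp only [hψCdef, toC0s_apply, Complex.norm_real, Real.norm_eq_abs]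
      rw [abs_of_nonneg (hφ01 _).1]; exact (hφ01 _).2
  -- apply semitransitivity
  obtain ⟨n, lam, hn1, hlam, f, hf1, hf2⟩ :=
    hst (Metric.ball φC ε) (Metric.ball (φC + ψC) ε) Metric.isOpen_ball Metric.isOpen_ball
      ⟨φC, Metric.mem_ball_self hεpos⟩ ⟨φC + ψC, Metric.mem_ball_self hεpos⟩
  obtain ⟨r, hrdef⟩ : ∃ r : ℝ, r = ‖lam‖ := ⟨_, rfl⟩
  have hrpos : 0 < r := by rw [hrdef]; exact norm_pos_iff.mpr hlam
  have hfp : ∀ x, ‖f x - φC x‖ < ε := by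
    intro x
    have hd : ‖f - φC‖ < ε := by rw [← dist_eq_norm]; exact Metric.mem_ball.mp hf1
    calc ‖f x - φC x‖ = ‖(f - φC) x‖ := by simp
      _ ≤ ‖f - φC‖ := C0_norm_apply_le _ x
      _ < ε := hd
  have hGp : ∀ x, ‖(lam • (T ^ n) f) x - (φC x + ψC x)‖ < ε := by
    intro x
    have hd : ‖lam • (T ^ n) f - (φC + ψC)‖ < ε := by
      rw [← dist_eq_norm]; exact Metric.mem_ball.mp hf2
    calc ‖(lam • (T ^ n) f) x - (φC x + ψC x)‖
        = ‖(lam • (T ^ n) f - (φC + ψC)) x‖ := by simp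
      _ ≤ ‖lam • (T ^ n) f - (φC + ψC)‖ := C0_norm_apply_le _ x
      _ < ε := hd
  have hwn_pos : ∀ x, 0 < ∏ j ∈ range n, w ((⇑α)^[j] x) :=
    fun x => Finset.prod_pos fun j _ => hw_pos _
  have hGnorm : ∀ x, ‖(lam • (T ^ n) f) x‖
      = r * (∏ j ∈ range n, w ((⇑α)^[j] x)) * ‖f ((⇑α)^[n] x)‖ := by
    intro x
    have hsmul : (lam • (T ^ n) f) x = lam * ((T ^ n) f x) := by simp
    rw [hsmul, Tpow α w T hT n f x, ← mul_assoc, norm_mul, norm_mul, Complex.norm_real,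
      Real.norm_eq_abs, abs_of_pos (hwn_pos x), hrdef]
  -- f is close to 1 on K
  have hfnorm_lb : ∀ t ∈ K, 1 - ε < ‖f t‖ := by
    intro t ht
    have h0 : φC t = 1 := by simp [hφCdef, hφ1 ht]
    have h1 := hfp t
    rw [h0] at h1
    have h2 := norm_sub_norm_le (1 : ℂ) (f t)
    rw [norm_sub_rev] at h2
    simp only [norm_one] at h2
    linarith
  -- force n > M
  have hforce : M + 1 < n := by
    by_contra hc
    push_neg at hc
    have hi : 1 - ε < r * (∏ j ∈ range n, w ((⇑α)^[j] ((⇑α)^[N] t₀))) * ε := by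
      have hφCs₀ : φC ((⇑α)^[N] t₀) = 0 := hφCz _ (notinF N le_rfl t₀ (hKL ht₀))
      have hψCs₀ : ψC ((⇑α)^[N] t₀) = 1 := by
        have heq : (⇑α.symm)^[N] ((⇑α)^[N] t₀) = t₀ := by
          rw [symm_iter α N N le_rfl, Nat.sub_self, Function.iterate_zero_apply]
        simp [hψCdef, heq, hφ1 ht₀]
      have hG := hGp ((⇑α)^[N] t₀)
      rw [hφCs₀, hψCs₀, zero_add] at hG
      have hlb : 1 - ε < ‖(lam • (T ^ n) f) ((⇑α)^[N] t₀)‖ := by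
        have h2 := norm_sub_norm_le (1 : ℂ) ((lam • (T ^ n) f) ((⇑α)^[N] t₀))
        rw [norm_sub_rev] at h2
        simp only [norm_one] at h2
        linarith
      have hfsmall : ‖f ((⇑α)^[n] ((⇑α)^[N] t₀))‖ < ε := by
        have hnotin : (⇑α)^[n] ((⇑α)^[N] t₀) ∉ tsupport ⇑φ := by
          rw [← Function.iterate_add_apply]
          exact notinF (n + N) (by omega) t₀ (hKL ht₀)
        have h5 := hfp ((⇑α)^[n] ((⇑α)^[N] t₀))
        rwa [hφCz _ hnotin, sub_zero] at h5
      rw [hGnorm _] at hlb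
      calc 1 - ε < r * (∏ j ∈ range n, w ((⇑α)^[j] ((⇑α)^[N] t₀)))
            * ‖f ((⇑α)^[n] ((⇑α)^[N] t₀))‖ := hlb
        _ ≤ r * (∏ j ∈ range n, w ((⇑α)^[j] ((⇑α)^[N] t₀))) * ε :=
            mul_le_mul_of_nonneg_left (le_of_lt hfsmall)
              (mul_nonneg (le_of_lt hrpos) (le_of_lt (hwn_pos _)))
    have hii : r * (∏ j ∈ range n, w ((⇑α)^[j] ((⇑α.symm)^[n] t₀))) * (1 - ε) < 1 + ε := by
      have hub : ‖(lam • (T ^ n) f) ((⇑α.symm)^[n] t₀)‖ < 1 + ε := by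
        have hG := hGp ((⇑α.symm)^[n] t₀)
        have h2 := norm_sub_norm_le ((lam • (T ^ n) f) ((⇑α.symm)^[n] t₀))
          (φC ((⇑α.symm)^[n] t₀) + ψC ((⇑α.symm)^[n] t₀))
        have h3 := hsum1 ((⇑α.symm)^[n] t₀)
        linarith
      rw [hGnorm _, iter_symm α n t₀] at hub
      have hflb := hfnorm_lb t₀ ht₀
      have hp : 0 < r * (∏ j ∈ range n, w ((⇑α)^[j] ((⇑α.symm)^[n] t₀))) :=
        mul_pos hrpos (hwn_pos _)
      calc r * (∏ j ∈ range n, w ((⇑α)^[j] ((⇑α.symm)^[n] t₀))) * (1 - ε)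
          < r * (∏ j ∈ range n, w ((⇑α)^[j] ((⇑α.symm)^[n] t₀))) * ‖f t₀‖ :=
            mul_lt_mul_of_pos_left hflb hp
        _ < 1 + ε := hub
    have hsum0 : r * (∏ j ∈ range n, w ((⇑α)^[j] ((⇑α)^[N] t₀)))
        ≤ D^n * (r * (∏ j ∈ range n, w ((⇑α)^[j] ((⇑α.symm)^[n] t₀)))) := by
      have hb1 : (∏ j ∈ range n, w ((⇑α)^[j] ((⇑α)^[N] t₀))) ≤ C^n := by
        calc (∏ j ∈ range n, w ((⇑α)^[j] ((⇑α)^[N] t₀)))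
            ≤ ∏ _j ∈ range n, C := Finset.prod_le_prod
              (fun j _ => le_of_lt (hw_pos _)) (fun j _ => hCw _)
          _ = C^n := by rw [Finset.prod_const, card_range]
      have hb2 : (C'⁻¹)^n ≤ (∏ j ∈ range n, w ((⇑α)^[j] ((⇑α.symm)^[n] t₀))) := by
        calc (C'⁻¹)^n = ∏ _j ∈ range n, C'⁻¹ := by rw [Finset.prod_const, card_range]
          _ ≤ _ := Finset.prod_le_prod (fun j _ => le_of_lt (inv_pos.mpr hC'pos))
              (fun j _ => hwlow _)
      have hC'ne : (C' : ℝ) ≠ 0 := ne_of_gt hC'pos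
      calc r * (∏ j ∈ range n, w ((⇑α)^[j] ((⇑α)^[N] t₀)))
          ≤ r * C^n := mul_le_mul_of_nonneg_left hb1 (le_of_lt hrpos)
        _ = D^n * (r * (C'⁻¹)^n) := by
            rw [hDeq, mul_pow, inv_pow]
            field_simp
        _ ≤ D^n * (r * (∏ j ∈ range n, w ((⇑α)^[j] ((⇑α.symm)^[n] t₀)))) := by
            apply mul_le_mul_of_nonneg_left _ (le_of_lt (pow_pos hDpos n))
            exact mul_le_mul_of_nonneg_left hb2 (le_of_lt hrpos)
    have hDn : (0:ℝ) < D^n := pow_pos hDpos n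
    have hkey : (1 - ε) * (1 - ε) < D^n * ε * (1 + ε) := by
      calc (1 - ε) * (1 - ε)
          < r * (∏ j ∈ range n, w ((⇑α)^[j] ((⇑α)^[N] t₀))) * ε * (1 - ε) :=
            mul_lt_mul_of_pos_right hi h1ε
        _ = (r * (∏ j ∈ range n, w ((⇑α)^[j] ((⇑α)^[N] t₀)))) * (ε * (1 - ε)) := by ring
        _ ≤ (D^n * (r * (∏ j ∈ range n, w ((⇑α)^[j] ((⇑α.symm)^[n] t₀))))) * (ε * (1 - ε)) :=
            mul_le_mul_of_nonneg_right hsum0 (mul_nonneg (le_of_lt hεpos) (le_of_lt h1ε))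
        _ = (D^n * ε) * (r * (∏ j ∈ range n, w ((⇑α)^[j] ((⇑α.symm)^[n] t₀))) * (1 - ε)) := by
            ring
        _ < (D^n * ε) * (1 + ε) := mul_lt_mul_of_pos_left hii (mul_pos hDn hεpos)
        _ = D^n * ε * (1 + ε) := by ring
    have hq : (1:ℝ)/6 < D^n * ε := by nlinarith [mul_pos hDn hεpos]
    have hDmono : D^n ≤ D^(M+1) := pow_le_pow_right₀ hD1 hc
    have h5 : D^n * ε ≤ D^(M+1) * ε := mul_le_mul_of_nonneg_right hDmono (le_of_lt hεpos)
    nlinarith [h5, hq, hεM]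
  have hNn : N ≤ n := by omega
  refine ⟨n, by omega, ?_⟩
  -- main estimates
  have est1 : ∀ t ∈ K, (1 - ε) * (∏ j ∈ range n, w ((⇑α)^[j] t))⁻¹ < r * ε := by
    intro t ht
    have hφCt : φC t = 1 := by simp [hφCdef, hφ1 ht]
    have hψCt : ψC t = 0 := hψCz t (notinB N le_rfl t (hKL ht))
    have hG := hGp t
    rw [hφCt, hψCt, add_zero] at hG
    have hlb : 1 - ε < ‖(lam • (T ^ n) f) t‖ := by
      have h2 := norm_sub_norm_le (1 : ℂ) ((lam • (T ^ n) f) t)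
      rw [norm_sub_rev] at h2
      simp only [norm_one] at h2
      linarith
    have hfsmall : ‖f ((⇑α)^[n] t)‖ < ε := by
      have hnotin : (⇑α)^[n] t ∉ tsupport ⇑φ := notinF n hNn t (hKL ht)
      have h5 := hfp ((⇑α)^[n] t)
      rwa [hφCz _ hnotin, sub_zero] at h5
    rw [hGnorm t] at hlb
    have hwt := hwn_pos t
    have h3 : 1 - ε < r * (∏ j ∈ range n, w ((⇑α)^[j] t)) * ε :=
      lt_of_lt_of_le hlb (mul_le_mul_of_nonneg_left (le_of_lt hfsmall)
        (mul_nonneg (le_of_lt hrpos) (le_of_lt hwt)))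
    have h4 := mul_lt_mul_of_pos_right h3 (inv_pos.mpr hwt)
    have hne := ne_of_gt hwt
    calc (1 - ε) * (∏ j ∈ range n, w ((⇑α)^[j] t))⁻¹
        < r * (∏ j ∈ range n, w ((⇑α)^[j] t)) * ε * (∏ j ∈ range n, w ((⇑α)^[j] t))⁻¹ := h4
      _ = r * ε := by field_simp
  have est2 : ∀ t ∈ K,
      ((1 - ε) * r) * (∏ j ∈ range n, w ((⇑α)^[j] ((⇑α.symm)^[n] t))) < ε := by
    intro t ht
    have hφCs : φC ((⇑α.symm)^[n] t) = 0 := hφCz _ (notinB n hNn t (hKL ht))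
    have hψCs : ψC ((⇑α.symm)^[n] t) = 0 := by
      apply hψCz
      rw [← Function.iterate_add_apply]
      exact notinB (N + n) (by omega) t (hKL ht)
    have hG := hGp ((⇑α.symm)^[n] t)
    rw [hφCs, hψCs, add_zero, sub_zero] at hG
    rw [hGnorm _, iter_symm α n t] at hG
    have hflb := hfnorm_lb t ht
    have hp : 0 < r * (∏ j ∈ range n, w ((⇑α)^[j] ((⇑α.symm)^[n] t))) :=
      mul_pos hrpos (hwn_pos _)
    calc ((1 - ε) * r) * (∏ j ∈ range n, w ((⇑α)^[j] ((⇑α.symm)^[n] t)))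
        = r * (∏ j ∈ range n, w ((⇑α)^[j] ((⇑α.symm)^[n] t))) * (1 - ε) := by ring
      _ < r * (∏ j ∈ range n, w ((⇑α)^[j] ((⇑α.symm)^[n] t))) * ‖f t‖ :=
          mul_lt_mul_of_pos_left hflb hp
      _ < ε := hG
  -- bounds on the two sSup's
  have hA : sSup ((fun t => ∏ j ∈ range n, w ((⇑α.symm)^[n - j] t)) '' K)
      ≤ ε / ((1 - ε) * r) := by
    apply Real.sSup_le
    · rintro x ⟨t, ht, rfl⟩
      dsimp only
      have hval : (∏ j ∈ range n, w ((⇑α.symm)^[n - j] t))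
          = ∏ j ∈ range n, w ((⇑α)^[j] ((⇑α.symm)^[n] t)) := by
        conv_lhs => rw [show t = (⇑α)^[n] ((⇑α.symm)^[n] t) from (iter_symm α n t).symm]
        exact prodA α w n _
      rw [hval, le_div_iff₀ (mul_pos h1ε hrpos)]
      rw [mul_comm]
      exact (est2 t ht).le
    · exact div_nonneg (le_of_lt hεpos) (le_of_lt (mul_pos h1ε hrpos))
  have hB : sSup ((fun t => ∏ j ∈ range n, (w ((⇑α)^[j] t))⁻¹) '' K)
      ≤ (r * ε) / (1 - ε) := by
    apply Real.sSup_le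
    · rintro x ⟨t, ht, rfl⟩
      dsimp only
      have hval : (∏ j ∈ range n, (w ((⇑α)^[j] t))⁻¹)
          = (∏ j ∈ range n, w ((⇑α)^[j] t))⁻¹ := by
        rw [← Finset.prod_inv_distrib]
      rw [hval, le_div_iff₀ h1ε, mul_comm]
      exact (est1 t ht).le
    · exact div_nonneg (mul_nonneg (le_of_lt hrpos) (le_of_lt hεpos)) (le_of_lt h1ε)
  have hB0 : 0 ≤ sSup ((fun t => ∏ j ∈ range n, (w ((⇑α)^[j] t))⁻¹) '' K) :=
    Real.sSup_nonneg (by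
      rintro x ⟨t, ht, rfl⟩
      exact Finset.prod_nonneg fun j _ => le_of_lt (inv_pos.mpr (hw_pos _)))
  have hfin : sSup ((fun t => ∏ j ∈ range n, w ((⇑α.symm)^[n - j] t)) '' K) *
      sSup ((fun t => ∏ j ∈ range n, (w ((⇑α)^[j] t))⁻¹) '' K)
      ≤ (ε / ((1 - ε) * r)) * ((r * ε) / (1 - ε)) :=
    mul_le_mul hA hB hB0 (div_nonneg (le_of_lt hεpos) (le_of_lt (mul_pos h1ε hrpos)))
  have h1ε' : (1:ℝ) - ε ≠ 0 := ne_of_gt h1ε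
  have hr' : r ≠ 0 := ne_of_gt hrpos
  have heq2 : (ε / ((1 - ε) * r)) * ((r * ε) / (1 - ε)) = (ε * ε) / ((1 - ε) * (1 - ε)) := by
    field_simp
  have hb4 : (ε * ε) / ((1 - ε) * (1 - ε)) ≤ 4 * (ε * ε) := by
    rw [div_le_iff₀ (mul_pos h1ε h1ε)]
    have h6 : 0 ≤ (ε*ε)*((2*(1-ε)-1)*(2*(1-ε)+1)) :=
      mul_nonneg (mul_pos hεpos hεpos).le (mul_nonneg (by linarith) (by linarith))
    nlinarith [h6]
  have hεδ : ε * ε ≤ δ / 9 := by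
    have h1 : ε * ε ≤ (Real.sqrt δ / 3) * (Real.sqrt δ / 3) :=
      mul_le_mul hεsqrt hεsqrt (le_of_lt hεpos) (by positivity)
    have h2 : (Real.sqrt δ / 3) * (Real.sqrt δ / 3) = δ / 9 := by
      have := Real.sq_sqrt (le_of_lt hδ)
      nlinarith
    linarith
  calc sSup ((fun t => ∏ j ∈ range n, w ((⇑α.symm)^[n - j] t)) '' K) *
      sSup ((fun t => ∏ j ∈ range n, (w ((⇑α)^[j] t))⁻¹) '' K)
      ≤ (ε * ε) / ((1 - ε) * (1 - ε)) := by rw [← heq2]; exact hfin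
    _ ≤ 4 * (ε * ε) := hb4
    _ < δ := by nlinarith

set_option maxHeartbeats 1000000 in
private lemma backward_semi
    {Ω : Type*} [TopologicalSpace Ω] [LocallyCompactSpace Ω] [T2Space Ω]
    (α : Ω ≃ₜ Ω)
    (w : Ω → ℝ) (hw_cont : Continuous w) (hw_pos : ∀ t, 0 < w t)
    (T S : C₀(Ω, ℂ) →L[ℂ] C₀(Ω, ℂ))
    (hT : ∀ (f : C₀(Ω, ℂ)) (t : Ω), T f t = (w t : ℂ) * f (α t))
    (hTS : ∀ f, T (S f) = f)
    (hcond : ∀ K : Set Ω, IsCompact K →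
      ∃ n : ℕ → ℕ, StrictMono n ∧ (∀ k, 1 ≤ n k) ∧
        Tendsto (fun k =>
            sSup ((fun t => ∏ j ∈ range (n k), w ((⇑α.symm)^[n k - j] t)) '' K) *
            sSup ((fun t => ∏ j ∈ range (n k), (w ((⇑α)^[j] t))⁻¹) '' K))
          atTop (nhds 0)) :
    IsSemiTransitive T := by
  intro O₁ O₂ hO₁ hO₂ hne₁ hne₂
  obtain ⟨f₁, hf₁⟩ := hne₁
  obtain ⟨g₁, hg₁⟩ := hne₂
  obtain ⟨ε₁, hε₁pos, hball₁⟩ := Metric.isOpen_iff.mp hO₁ f₁ hf₁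
  obtain ⟨ε₂, hε₂pos, hball₂⟩ := Metric.isOpen_iff.mp hO₂ g₁ hg₁
  obtain ⟨ε, hεpos, hεε₁, hεε₂⟩ : ∃ ε : ℝ, 0 < ε ∧ ε ≤ ε₁ ∧ ε ≤ ε₂ :=
    ⟨min ε₁ ε₂, lt_min hε₁pos hε₂pos, min_le_left _ _, min_le_right _ _⟩
  -- truncation
  have trunc : ∀ h : C₀(Ω, ℂ), ∃ (h₀ : C₀(Ω, ℂ)) (Lc : Set Ω), IsCompact Lc ∧
      (∀ t, h₀ t ≠ 0 → t ∈ Lc) ∧ ‖h₀ - h‖ ≤ ε/4 := by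
    intro h
    have hzero : Tendsto ⇑h (cocompact Ω) (nhds 0) := zero_at_infty h
    have hmem : ⇑h ⁻¹' Metric.ball 0 (ε/4) ∈ cocompact Ω :=
      hzero (Metric.ball_mem_nhds _ (by positivity))
    obtain ⟨Kc, hKc, hKsub⟩ := mem_cocompact.mp hmem
    obtain ⟨χ, hχ1, -, hχc, hχ01⟩ :=
      exists_continuous_one_zero_of_isCompact hKc isClosed_empty (Set.disjoint_empty _)
    have hcont : Continuous fun t => (χ t : ℂ) * h t :=
      (Complex.continuous_ofReal.comp χ.continuous).mul h.continuous
    have hsupp : HasCompactSupport fun t => (χ t : ℂ) * h t := by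
      apply HasCompactSupport.intro hχc
      intro x hx
      simp [image_eq_zero_of_notMem_tsupport hx]
    refine ⟨⟨⟨fun t => (χ t : ℂ) * h t, hcont⟩, HasCompactSupport.is_zero_at_infty hsupp⟩,
      tsupport ⇑χ, hχc, ?_, ?_⟩
    · intro t ht
      by_contra hmem2
      apply ht
      show (χ t : ℂ) * h t = 0
      simp [image_eq_zero_of_notMem_tsupport hmem2]
    · apply C0_norm_le (by positivity)
      intro t
      show ‖(χ t : ℂ) * h t - h t‖ ≤ ε/4
      have : (χ t : ℂ) * h t - h t = ((χ t : ℝ) - 1 : ℂ) * h t := by push_cast; ring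
      rw [this, norm_mul]
      by_cases htK : t ∈ Kc
      · have : χ t = 1 := hχ1 htK
        simp [this]
        positivity
      · have hsmall : ‖h t‖ < ε/4 := by
          have := hKsub htK
          simpa [Metric.mem_ball, dist_eq_norm] using this
        have habs : ‖((χ t : ℝ) - 1 : ℂ)‖ ≤ 1 := by
          rw [show ((χ t : ℝ) - 1 : ℂ) = (((χ t - 1 : ℝ)) : ℂ) by push_cast; ring,
            Complex.norm_real, Real.norm_eq_abs, abs_le]
          constructor <;> linarith [(hχ01 t).1, (hχ01 t).2]
        calc ‖((χ t : ℝ) - 1 : ℂ)‖ * ‖h t‖ ≤ 1 * (ε/4) :=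
              mul_le_mul habs (le_of_lt hsmall) (norm_nonneg _) zero_le_one
          _ = ε/4 := one_mul _
  obtain ⟨f₀, Lf, hLf, hLfsupp, hf₀⟩ := trunc f₁
  obtain ⟨g₀, Lg, hLg, hLgsupp, hg₀⟩ := trunc g₁
  -- the compact set and sequence
  obtain ⟨ns, hmono, hns1, htend⟩ := hcond (Lf ∪ Lg) (hLf.union hLg)
  have hwn_pos : ∀ (n : ℕ) (x : Ω), 0 < ∏ j ∈ range n, w ((⇑α)^[j] x) :=
    fun n x => Finset.prod_pos fun j _ => hw_pos _
  -- choose k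
  have hcpos : (0:ℝ) < (ε/4)^2/(8*(‖f₀‖+1)*(‖g₀‖+1)) := by positivity
  obtain ⟨k, hk⟩ := (htend.eventually (Iio_mem_nhds hcpos)).exists
  try dsimp only at hk
  set n : ℕ := ns k with hn
  have hn1 : 1 ≤ n := hns1 k
  -- abbreviations
  set A : ℝ := sSup ((fun t => ∏ j ∈ range n, w ((⇑α.symm)^[n - j] t)) '' (Lf ∪ Lg)) with hA
  set B : ℝ := sSup ((fun t => ∏ j ∈ range n, (w ((⇑α)^[j] t))⁻¹) '' (Lf ∪ Lg)) with hB
  have hA0 : 0 ≤ A := Real.sSup_nonneg (by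
    rintro x ⟨t, ht, rfl⟩
    exact Finset.prod_nonneg fun j _ => le_of_lt (hw_pos _))
  have hB0 : 0 ≤ B := Real.sSup_nonneg (by
    rintro x ⟨t, ht, rfl⟩
    exact Finset.prod_nonneg fun j _ => le_of_lt (inv_pos.mpr (hw_pos _)))
  have hbddA : BddAbove ((fun t => ∏ j ∈ range n, w ((⇑α.symm)^[n - j] t)) '' (Lf ∪ Lg)) := by
    apply IsCompact.bddAbove_image (hLf.union hLg)
    apply Continuous.continuousOn
    exact continuous_finset_prod _ fun j _ => hw_cont.comp (α.symm.continuous.iterate _)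
  have hbddB : BddAbove ((fun t => ∏ j ∈ range n, (w ((⇑α)^[j] t))⁻¹) '' (Lf ∪ Lg)) := by
    apply IsCompact.bddAbove_image (hLf.union hLg)
    apply Continuous.continuousOn
    exact continuous_finset_prod _ fun j _ =>
      (hw_cont.comp (α.continuous.iterate _)).inv₀ fun t => ne_of_gt (hw_pos _)
  -- norm bounds
  have hTn : ‖(T ^ n) f₀‖ ≤ A * ‖f₀‖ := by
    apply C0_norm_le (mul_nonneg hA0 (norm_nonneg f₀))
    intro t
    rw [Tpow α w T hT n f₀ t, norm_mul, Complex.norm_real, Real.norm_eq_abs,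
      abs_of_pos (hwn_pos n t)]
    by_cases hz : f₀ ((⇑α)^[n] t) = 0
    · rw [hz, norm_zero, mul_zero]
      exact mul_nonneg hA0 (norm_nonneg _)
    · have hmem : (⇑α)^[n] t ∈ Lf ∪ Lg := Set.mem_union_left _ (hLfsupp _ hz)
      have hle : (∏ j ∈ range n, w ((⇑α)^[j] t)) ≤ A := by
        have h7 := le_csSup hbddA ⟨(⇑α)^[n] t, hmem, rfl⟩
        dsimp only at h7
        rwa [prodA α w n t] at h7
      exact mul_le_mul hle (C0_norm_apply_le f₀ _) (norm_nonneg _) hA0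
  have hSn : ‖(S ^ n) g₀‖ ≤ B * ‖g₀‖ := by
    apply C0_norm_le (mul_nonneg hB0 (norm_nonneg g₀))
    intro s
    have heq := Tpow α w T hT n ((S ^ n) g₀) ((⇑α.symm)^[n] s)
    rw [TSpow T S hTS n g₀, iter_symm α n s] at heq
    have hwt := hwn_pos n ((⇑α.symm)^[n] s)
    have hnorm : ‖(S ^ n) g₀ s‖
        = (∏ j ∈ range n, w ((⇑α)^[j] ((⇑α.symm)^[n] s)))⁻¹ * ‖g₀ ((⇑α.symm)^[n] s)‖ := by
      rw [heq, norm_mul, Complex.norm_real, Real.norm_eq_abs, abs_of_pos hwt]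
      rw [← mul_assoc, inv_mul_cancel₀ (ne_of_gt hwt), one_mul]
    by_cases hz : g₀ ((⇑α.symm)^[n] s) = 0
    · rw [hnorm, hz, norm_zero, mul_zero]
      exact mul_nonneg hB0 (norm_nonneg _)
    · have hmem : (⇑α.symm)^[n] s ∈ Lf ∪ Lg := Set.mem_union_right _ (hLgsupp _ hz)
      have hle : (∏ j ∈ range n, w ((⇑α)^[j] ((⇑α.symm)^[n] s)))⁻¹ ≤ B := by
        have h7 := le_csSup hbddB ⟨(⇑α.symm)^[n] s, hmem, rfl⟩
        dsimp only at h7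
        rwa [Finset.prod_inv_distrib] at h7
      rw [hnorm]
      exact mul_le_mul hle (C0_norm_apply_le g₀ _) (norm_nonneg _) hB0
  -- the product bound
  have hPQ : (A * ‖f₀‖) * (B * ‖g₀‖) < (ε/4)^2/8 := by
    have hF1 : (0:ℝ) < ‖f₀‖ + 1 := by positivity
    have hG1 : (0:ℝ) < ‖g₀‖ + 1 := by positivity
    have step1 : A * B * (‖f₀‖ * ‖g₀‖) ≤ A * B * ((‖f₀‖+1) * (‖g₀‖+1)) := by
      apply mul_le_mul_of_nonneg_left _ (mul_nonneg hA0 hB0)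
      nlinarith [norm_nonneg f₀, norm_nonneg g₀]
    have step2 : A * B * ((‖f₀‖+1) * (‖g₀‖+1))
        < ((ε/4)^2/(8*(‖f₀‖+1)*(‖g₀‖+1))) * ((‖f₀‖+1) * (‖g₀‖+1)) :=
      mul_lt_mul_of_pos_right hk (mul_pos hF1 hG1)
    have step3 : ((ε/4)^2/(8*(‖f₀‖+1)*(‖g₀‖+1))) * ((‖f₀‖+1) * (‖g₀‖+1)) = (ε/4)^2/8 := by
      field_simp
    calc (A * ‖f₀‖) * (B * ‖g₀‖) = A * B * (‖f₀‖ * ‖g₀‖) := by ring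
      _ ≤ A * B * ((‖f₀‖+1) * (‖g₀‖+1)) := step1
      _ < (ε/4)^2/8 := by rw [← step3]; exact step2
  -- choice of scalar
  obtain ⟨r, hr0, hrP, hrQ⟩ :
      ∃ r : ℝ, 0 < r ∧ r * (A * ‖f₀‖) < ε/4 ∧ (B * ‖g₀‖) < r * (ε/4) := by
    by_cases hP : A * ‖f₀‖ = 0
    · refine ⟨(B * ‖g₀‖ + 1) * (4/ε), by positivity, by rw [hP, mul_zero]; positivity, ?_⟩
      have : (B * ‖g₀‖ + 1) * (4/ε) * (ε/4) = B * ‖g₀‖ + 1 := by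
        field_simp
      rw [this]
      linarith
    · have hPpos : 0 < A * ‖f₀‖ :=
        lt_of_le_of_ne (mul_nonneg hA0 (norm_nonneg _)) (Ne.symm hP)
      refine ⟨(ε/4)/(2*(A * ‖f₀‖)), by positivity, ?_, ?_⟩
      · have h8 : (ε/4)/(2*(A * ‖f₀‖)) * (A * ‖f₀‖) = ε/8 := by
          rw [div_mul_eq_mul_div, div_eq_iff (by positivity)]
          ring
        rw [h8]
        linarith
      · have h9 : (B * ‖g₀‖) * (2*(A * ‖f₀‖)) < (ε/4)*(ε/4) := by
          nlinarith [hPQ, hPpos, mul_nonneg hB0 (norm_nonneg g₀)]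
        rw [div_mul_eq_mul_div, lt_div_iff₀ (by positivity)]
        nlinarith [h9]
  have hlamne : ((r : ℂ)) ≠ 0 := Complex.ofReal_ne_zero.mpr (ne_of_gt hr0)
  have hnormlam : ‖((r : ℂ))‖ = r := by
    rw [Complex.norm_real, Real.norm_eq_abs, abs_of_pos hr0]
  refine ⟨n, (r : ℂ), hn1, hlamne, f₀ + ((r : ℂ))⁻¹ • ((S ^ n) g₀), ?_, ?_⟩
  · apply hball₁
    rw [Metric.mem_ball, dist_eq_norm]
    have heqf : f₀ + ((r : ℂ))⁻¹ • ((S ^ n) g₀) - f₁ = (f₀ - f₁) + ((r : ℂ))⁻¹ • ((S ^ n) g₀) := by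
      abel
    rw [heqf]
    have h1 : ‖((r : ℂ))⁻¹ • ((S ^ n) g₀)‖ = r⁻¹ * ‖(S ^ n) g₀‖ := by
      have h0 := norm_smul ((r : ℂ))⁻¹ ((S ^ n) g₀)
      rwa [norm_inv, hnormlam] at h0
    have h2 : r⁻¹ * ‖(S ^ n) g₀‖ ≤ r⁻¹ * (B * ‖g₀‖) :=
      mul_le_mul_of_nonneg_left hSn (inv_nonneg.mpr hr0.le)
    have h3 : r⁻¹ * (B * ‖g₀‖) < ε/4 := by
      rw [inv_mul_eq_div, div_lt_iff₀ hr0]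
      nlinarith [hrQ]
    have h6 := norm_add_le (f₀ - f₁) (((r : ℂ))⁻¹ • ((S ^ n) g₀))
    rw [h1] at h6
    linarith [hf₀, hεε₁, hεpos]
  · apply hball₂
    rw [Metric.mem_ball, dist_eq_norm]
    have hTf : (r : ℂ) • (T ^ n) (f₀ + ((r : ℂ))⁻¹ • ((S ^ n) g₀))
        = (r : ℂ) • ((T ^ n) f₀) + g₀ := by
      have e1 : (T ^ n) (f₀ + ((r : ℂ))⁻¹ • ((S ^ n) g₀))
          = (T ^ n) f₀ + ((r : ℂ))⁻¹ • ((T ^ n) ((S ^ n) g₀)) := by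
        rw [map_add]
        congr 1
        exact map_smul _ _ _
      rw [e1, TSpow T S hTS n g₀]
      ext x
      simp only [ZeroAtInftyContinuousMap.coe_smul, ZeroAtInftyContinuousMap.coe_add,
        Pi.smul_apply, Pi.add_apply, smul_eq_mul]
      field_simp
    rw [hTf]
    have heq2 : (r : ℂ) • ((T ^ n) f₀) + g₀ - g₁ = (r : ℂ) • ((T ^ n) f₀) + (g₀ - g₁) := by
      abel
    rw [heq2]
    have h1 : ‖(r : ℂ) • ((T ^ n) f₀)‖ = r * ‖(T ^ n) f₀‖ := by
      have h0 := norm_smul ((r : ℂ)) ((T ^ n) f₀)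
      rwa [hnormlam] at h0
    have h2 : r * ‖(T ^ n) f₀‖ ≤ r * (A * ‖f₀‖) := mul_le_mul_of_nonneg_left hTn hr0.le
    have h6 := norm_add_le ((r : ℂ) • ((T ^ n) f₀)) (g₀ - g₁)
    rw [h1] at h6
    linarith [hg₀, hεε₂, hεpos, hrP]


theorem semi_transitive_iff_weight_condition_C0
    {Ω : Type*} [TopologicalSpace Ω] [LocallyCompactSpace Ω] [T2Space Ω]
    [NoncompactSpace Ω]
    (α : Ω ≃ₜ Ω)
    (haper : ∀ K : Set Ω, IsCompact K →
      ∃ N : ℕ, 0 < N ∧ ∀ n ≥ N, ((⇑α)^[n] '' K) ∩ K = ∅)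
    (w : Ω → ℝ) (hw_cont : Continuous w) (hw_pos : ∀ t, 0 < w t)
    (hw_bdd : ∃ C, ∀ t, w t ≤ C) (hw_inv_bdd : ∃ C, ∀ t, (w t)⁻¹ ≤ C)
    (T S : C₀(Ω, ℂ) →L[ℂ] C₀(Ω, ℂ))
    (hT : ∀ (f : C₀(Ω, ℂ)) (t : Ω), T f t = (w t : ℂ) * f (α t))
    (hST : ∀ f, S (T f) = f) (hTS : ∀ f, T (S f) = f) :
    IsSemiTransitive T ↔
      ∀ K : Set Ω, IsCompact K →
        ∃ n : ℕ → ℕ, StrictMono n ∧ (∀ k, 1 ≤ n k) ∧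
          Tendsto (fun k =>
              sSup ((fun t => ∏ j ∈ range (n k), w ((⇑α.symm)^[n k - j] t)) '' K) *
              sSup ((fun t => ∏ j ∈ range (n k), (w ((⇑α)^[j] t))⁻¹) '' K))
            atTop (nhds 0) := by
  constructor
  · intro hst K hK
    have claim : ∀ (p : ℕ) (k : ℕ), ∃ n' : ℕ, p < n' ∧
        (fun n' => sSup ((fun t => ∏ j ∈ range n', w ((⇑α.symm)^[n' - j] t)) '' K) *
          sSup ((fun t => ∏ j ∈ range n', (w ((⇑α)^[j] t))⁻¹) '' K)) n' < 1/((k:ℝ)+1) :=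
      fun p k => forward_claim α haper w hw_pos hw_bdd hw_inv_bdd T hT hst K hK p
        (1/((k:ℝ)+1)) (by positivity)
    obtain ⟨seq, hmono, hone, hbound⟩ := seq_build claim
    refine ⟨seq, hmono, hone, ?_⟩
    apply squeeze_zero (g := fun k : ℕ => 1/((k:ℝ)+1)) ?_ ?_
      tendsto_one_div_add_atTop_nhds_zero_nat
    · intro k
      apply mul_nonneg
      · exact Real.sSup_nonneg (by
          rintro x ⟨t, ht, rfl⟩
          exact Finset.prod_nonneg fun j _ => le_of_lt (hw_pos _))
      · exact Real.sSup_nonneg (by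
          rintro x ⟨t, ht, rfl⟩
          exact Finset.prod_nonneg fun j _ => le_of_lt (inv_pos.mpr (hw_pos _)))
    · intro k
      exact (hbound k).le
  · intro hcond
    exact backward_semi α w hw_cont hw_pos T S hT hTS hcond
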